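/- Let R be a ring, F_l a Gabriel filter of left ideals and F_r a Gabriel filter of right ideals of R, inducing the symmetric filter ₗF_r of right ideals of R ⊗_ℤ R^op. For an R-bimodule M with symmetric torsion submodule ₗt_r(M) = t_l(M) ∩ t_r(M) and x ∈ M, the following are equivalent: (1) x ∈ ₗt_r(M); (2) the left annihilator ann_l(x) is in F_l and the right annihilator ann_r(x) is in F_r; (3) ann_r(x) ⊗_ℤ R^op + R ⊗_ℤ ann_l(x) ∈ ₗF_r; (4) the annihilator ₗann_r(x) = {t ∈ R ⊗_ℤ R^op | xt = 0} is in ₗF_r. -/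

import Mathlib

open MulOpposite TensorProduct

/-- A derivation on a ring `S`: an additive map satisfying the Leibniz rule
`δ (a * b) = δ a * b + a * δ b`. -/
def IsDerivation {S : Type*} [Ring S] (δ : S → S) : Prop :=
  (∀ a b : S, δ (a + b) = δ a + δ b) ∧ (∀ a b : S, δ (a * b) = δ a * b + a * δ b)

/-- A Gabriel filter of left ideals of a ring `S`.  Taking `S = Rᵐᵒᵖ`, this encodes a
Gabriel filter of right ideals of `R`. -/
structure GabrielFilter (S : Type*) [Ring S] where
  sets : Set (Ideal S)
  top_mem : ⊤ ∈ sets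
  mono : ∀ ⦃I J : Ideal S⦄, I ∈ sets → I ≤ J → J ∈ sets
  inf_mem : ∀ ⦃I J : Ideal S⦄, I ∈ sets → J ∈ sets → I ⊓ J ∈ sets
  quot_mem : ∀ ⦃I : Ideal S⦄, I ∈ sets → ∀ s : S,
    Submodule.comap (LinearMap.toSpanSingleton S S s) I ∈ sets
  trans : ∀ ⦃I J : Ideal S⦄, J ∈ sets →
    (∀ s ∈ J, Submodule.comap (LinearMap.toSpanSingleton S S s) I ∈ sets) → I ∈ sets

/-- The torsion set of a module for the torsion theory corresponding to a filter `𝔉` of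
ideals: the elements whose annihilator belongs to `𝔉`. -/
def torsionSet {S : Type*} [Ring S] (𝔉 : Set (Ideal S)) (M : Type*) [AddCommGroup M]
    [Module S M] : Set M :=
  {x : M | LinearMap.ker (LinearMap.toSpanSingleton S M x) ∈ 𝔉}

/-- The enveloping ring `R ⊗_ℤ Rᵐᵒᵖ`; an `R`-bimodule is the same thing as a right
`R ⊗_ℤ Rᵐᵒᵖ`-module, i.e. a left `(R ⊗_ℤ Rᵐᵒᵖ)ᵐᵒᵖ`-module, via `x • (r ⊗ s) = s x r`. -/
abbrev Env (R : Type*) [Ring R] := R ⊗[ℤ] Rᵐᵒᵖ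

/-- The left annihilator of an element of an `R`-bimodule, a left ideal of `R`:
`ann_l(x) = {s : R | s • x = 0}`, where the left action of `s` is the action of
`1 ⊗ op s`. -/
def lAnn {R : Type*} [Ring R] (M : Type*) [AddCommGroup M] [Module (Env R)ᵐᵒᵖ M]
    (x : M) : Ideal R where
  carrier := {s : R | op ((1 : R) ⊗ₜ[ℤ] op s) • x = 0}
  zero_mem' := by
    first
    | (simp; exact zero_smul (Env R)ᵐᵒᵖ x)
    | (show op ((1 : R) ⊗ₜ[ℤ] op (0 : R)) • x = 0
       rw [op_zero, TensorProduct.tmul_zero, op_zero, zero_smul])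
  add_mem' := by
    intro a b ha hb
    simp only [Set.mem_setOf_eq] at *
    rw [show ((1 : R) ⊗ₜ[ℤ] op (a + b)) = (1 : R) ⊗ₜ[ℤ] op a + (1 : R) ⊗ₜ[ℤ] op b by
        rw [op_add, TensorProduct.tmul_add],
      op_add, add_smul, ha, hb, add_zero]
  smul_mem' := by
    intro c s hs
    simp only [Set.mem_setOf_eq, smul_eq_mul] at *
    rw [show ((1 : R) ⊗ₜ[ℤ] op (c * s)) = ((1 : R) ⊗ₜ[ℤ] op s) * ((1 : R) ⊗ₜ[ℤ] op c) by
        rw [Algebra.TensorProduct.tmul_mul_tmul, one_mul, ← op_mul],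
      op_mul, mul_smul, hs, smul_zero]

/-- The right annihilator of an element of an `R`-bimodule, a right ideal of `R`
(encoded as a left ideal of `Rᵐᵒᵖ`): `ann_r(x) = {r | x • r = 0}`, where the right
action of `r` is the action of `r ⊗ 1`. -/
def rAnn {R : Type*} [Ring R] (M : Type*) [AddCommGroup M] [Module (Env R)ᵐᵒᵖ M]
    (x : M) : Ideal Rᵐᵒᵖ where
  carrier := {j : Rᵐᵒᵖ | op (unop j ⊗ₜ[ℤ] (1 : Rᵐᵒᵖ)) • x = 0}
  zero_mem' := by
    first
    | (simp; exact zero_smul (Env R)ᵐᵒᵖ x)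
    | (show op (unop (0 : Rᵐᵒᵖ) ⊗ₜ[ℤ] (1 : Rᵐᵒᵖ)) • x = 0
       rw [unop_zero, TensorProduct.zero_tmul, op_zero, zero_smul])
  add_mem' := by
    intro a b ha hb
    simp only [Set.mem_setOf_eq] at *
    rw [show (unop (a + b) ⊗ₜ[ℤ] (1 : Rᵐᵒᵖ)) =
          unop a ⊗ₜ[ℤ] (1 : Rᵐᵒᵖ) + unop b ⊗ₜ[ℤ] (1 : Rᵐᵒᵖ) by
        rw [unop_add, TensorProduct.add_tmul],
      op_add, add_smul, ha, hb, add_zero]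
  smul_mem' := by
    intro c j hj
    simp only [Set.mem_setOf_eq, smul_eq_mul] at *
    rw [show (unop (c * j) ⊗ₜ[ℤ] (1 : Rᵐᵒᵖ)) =
          (unop j ⊗ₜ[ℤ] (1 : Rᵐᵒᵖ)) * (unop c ⊗ₜ[ℤ] (1 : Rᵐᵒᵖ)) by
        rw [Algebra.TensorProduct.tmul_mul_tmul, one_mul, unop_mul],
      op_mul, mul_smul, hj, smul_zero]

/-- The symmetric annihilator of an element of a bimodule: the right ideal
`{t ∈ R ⊗_ℤ Rᵐᵒᵖ | x t = 0}`. -/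
def symAnn {R : Type*} [Ring R] (M : Type*) [AddCommGroup M] [Module (Env R)ᵐᵒᵖ M]
    (x : M) : Ideal (Env R)ᵐᵒᵖ :=
  LinearMap.ker (LinearMap.toSpanSingleton (Env R)ᵐᵒᵖ M x)

/-- The right ideal `J ⊗ Rᵐᵒᵖ + R ⊗ I` of `R ⊗_ℤ Rᵐᵒᵖ` generated by a left ideal `I`
and a right ideal `J` of `R`. -/
def symGen {R : Type*} [Ring R] (I : Ideal R) (J : Ideal Rᵐᵒᵖ) : Ideal (Env R)ᵐᵒᵖ :=
  Ideal.span ((fun j : Rᵐᵒᵖ => op (unop j ⊗ₜ[ℤ] (1 : Rᵐᵒᵖ))) '' (J : Set Rᵐᵒᵖ) ∪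
    (fun i : R => op ((1 : R) ⊗ₜ[ℤ] op i)) '' (I : Set R))

/-- The symmetric Gabriel filter induced by a left Gabriel filter `Fl` and a right
Gabriel filter `Fr`: the right ideals of `R ⊗_ℤ Rᵐᵒᵖ` containing `J ⊗ Rᵐᵒᵖ + R ⊗ I` for
some `I ∈ Fl` and `J ∈ Fr`. -/
def symSets {R : Type*} [Ring R] (Fl : GabrielFilter R) (Fr : GabrielFilter Rᵐᵒᵖ) :
    Set (Ideal (Env R)ᵐᵒᵖ) :=
  {K | ∃ I ∈ Fl.sets, ∃ J ∈ Fr.sets, symGen I J ≤ K}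

/-- The torsion submodule of a bimodule for the symmetric torsion theory induced by `Fl`
and `Fr`: `ₗt_r(M) = t_l(M) ∩ t_r(M)`. -/
def symTorsion {R : Type*} [Ring R] (Fl : GabrielFilter R) (Fr : GabrielFilter Rᵐᵒᵖ)
    (M : Type*) [AddCommGroup M] [Module (Env R)ᵐᵒᵖ M] : Set M :=
  {x : M | lAnn M x ∈ Fl.sets} ∩ {x : M | rAnn M x ∈ Fr.sets}

/-- `δ'` is the derivation induced on `R ⊗_ℤ Rᵐᵒᵖ` by the derivation `δ` on `R`:
`δ̄(r ⊗ s) = δ r ⊗ s + r ⊗ δ s`. -/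
def IsInducedDerivation {R : Type*} [Ring R] (δ : R → R) (δ' : Env R → Env R) : Prop :=
  (∀ a b : Env R, δ' (a + b) = δ' a + δ' b) ∧
    ∀ r s : R, δ' (r ⊗ₜ[ℤ] op s) = δ r ⊗ₜ[ℤ] op s + r ⊗ₜ[ℤ] op (δ s)

/-- `d` is a `δ`-derivation on the `R`-bimodule `M`: `d` is additive,
`d (x r) = (d x) r + x (δ r)` and `d (s x) = (δ s) x + s (d x)`. -/
def IsBimodDerivation {R : Type*} [Ring R] (δ : R → R) {M : Type*} [AddCommGroup M]
    [Module (Env R)ᵐᵒᵖ M] (d : M → M) : Prop :=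
  (∀ x y : M, d (x + y) = d x + d y) ∧
  (∀ (x : M) (r : R),
    d (op (r ⊗ₜ[ℤ] (1 : Rᵐᵒᵖ)) • x) =
      op (r ⊗ₜ[ℤ] (1 : Rᵐᵒᵖ)) • d x + op (δ r ⊗ₜ[ℤ] (1 : Rᵐᵒᵖ)) • x) ∧
  (∀ (x : M) (s : R),
    d (op ((1 : R) ⊗ₜ[ℤ] op s) • x) =
      op ((1 : R) ⊗ₜ[ℤ] op (δ s)) • x + op ((1 : R) ⊗ₜ[ℤ] op s) • d x)

/-- The symmetric filter induced by `Fl` and `Fr` is differential: for every `I` in the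
filter there is `K` in the filter with `δ̄(K) ⊆ I` for all derivations `δ` on `R`. -/
def IsSymDifferential {R : Type*} [Ring R] (Fl : GabrielFilter R)
    (Fr : GabrielFilter Rᵐᵒᵖ) : Prop :=
  ∀ I ∈ symSets Fl Fr, ∃ K ∈ symSets Fl Fr, ∀ δ : R → R, IsDerivation δ →
    ∀ δ' : Env R → Env R, IsInducedDerivation δ δ' →
      ∀ t : (Env R)ᵐᵒᵖ, t ∈ K → op (δ' (unop t)) ∈ I

/-- `q : M → Q` realizes `Q` as the symmetric module of quotients of the bimodule `M`
with respect to the symmetric filter induced by `Fl` and `Fr`: the kernel of `q` is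
`ₗt_r(M)`, `Q` is torsion free, the cokernel of `q` is torsion, and `Q` is closed. -/
structure IsSymModuleOfQuotients {R : Type*} [Ring R] (Fl : GabrielFilter R)
    (Fr : GabrielFilter Rᵐᵒᵖ) {M Q : Type*} [AddCommGroup M] [Module (Env R)ᵐᵒᵖ M]
    [AddCommGroup Q] [Module (Env R)ᵐᵒᵖ Q] (q : M →ₗ[(Env R)ᵐᵒᵖ] Q) : Prop where
  ker_eq : (LinearMap.ker q : Set M) = symTorsion Fl Fr M
  torsionFree : symTorsion Fl Fr Q = {0}
  coker_torsion : ∀ y : Q,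
    Submodule.comap (LinearMap.toSpanSingleton (Env R)ᵐᵒᵖ Q y) (LinearMap.range q) ∈
      symSets Fl Fr
  closed : ∀ K ∈ symSets Fl Fr, ∀ f : ↥K →ₗ[(Env R)ᵐᵒᵖ] Q,
    ∃ g : (Env R)ᵐᵒᵖ →ₗ[(Env R)ᵐᵒᵖ] Q, ∀ t : ↥K, g ↑t = f t

lemma symGen_le_symAnn {R : Type*} [Ring R] {M : Type*} [AddCommGroup M]
    [Module (Env R)ᵐᵒᵖ M] (x : M) :
    symGen (lAnn (R := R) M x) (rAnn (R := R) M x) ≤ symAnn (R := R) M x := by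
  rw [symGen, Ideal.span_le]
  rintro t (⟨j, hj, rfl⟩ | ⟨i, hi, rfl⟩)
  · exact hj
  · exact hi

lemma le_of_symGen_le_symAnn {R : Type*} [Ring R] {M : Type*} [AddCommGroup M]
    [Module (Env R)ᵐᵒᵖ M] (x : M) {I : Ideal R} {J : Ideal Rᵐᵒᵖ}
    (h : symGen I J ≤ symAnn (R := R) M x) :
    I ≤ lAnn (R := R) M x ∧ J ≤ rAnn (R := R) M x := by
  constructor
  · intro i hi
    have : op ((1 : R) ⊗ₜ[ℤ] op i) ∈ symGen I J :=
      Ideal.subset_span (Or.inr ⟨i, hi, rfl⟩)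
    simpa [symAnn, LinearMap.mem_ker, LinearMap.toSpanSingleton_apply, lAnn] using h this
  · intro j hj
    have : op (unop j ⊗ₜ[ℤ] (1 : Rᵐᵒᵖ)) ∈ symGen I J :=
      Ideal.subset_span (Or.inl ⟨j, hj, rfl⟩)
    simpa [symAnn, LinearMap.mem_ker, LinearMap.toSpanSingleton_apply, rAnn] using h this

lemma symGen_mono {R : Type*} [Ring R] {I I' : Ideal R} {J J' : Ideal Rᵐᵒᵖ}
    (hI : I ≤ I') (hJ : J ≤ J') : symGen I J ≤ symGen I' J' :=
  Ideal.span_mono (Set.union_subset_union (Set.image_mono hJ) (Set.image_mono hI))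

/-- Let `Fl` be a Gabriel filter of left ideals and `Fr` a Gabriel
filter of right ideals of `R`, inducing the symmetric filter `ₗF_r` on `R ⊗_ℤ Rᵐᵒᵖ`.
For an `R`-bimodule `M` and `x ∈ M` the following are equivalent: (1) `x ∈ ₗt_r(M)`;
(2) `ann_l(x) ∈ Fl` and `ann_r(x) ∈ Fr`; (3) `ann_r(x) ⊗ Rᵐᵒᵖ + R ⊗ ann_l(x) ∈ ₗF_r`;
(4) `ₗann_r(x) = {t | x t = 0} ∈ ₗF_r`. -/
theorem symTorsion_iff_annihilators {R : Type*} [Ring R]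
    (Fl : GabrielFilter R) (Fr : GabrielFilter Rᵐᵒᵖ)
    {M : Type*} [AddCommGroup M] [Module (Env R)ᵐᵒᵖ M] (x : M) :
    (x ∈ symTorsion Fl Fr M ↔ (lAnn M x ∈ Fl.sets ∧ rAnn M x ∈ Fr.sets)) ∧
    ((lAnn M x ∈ Fl.sets ∧ rAnn M x ∈ Fr.sets) ↔
      symGen (lAnn M x) (rAnn M x) ∈ symSets Fl Fr) ∧
    (symGen (lAnn M x) (rAnn M x) ∈ symSets Fl Fr ↔ symAnn M x ∈ symSets Fl Fr) := by
  refine ⟨Iff.rfl, ?_, ?_⟩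
  · constructor
    · rintro ⟨hl, hr⟩
      exact ⟨lAnn M x, hl, rAnn M x, hr, le_rfl⟩
    · rintro ⟨I, hI, J, hJ, hle⟩
      obtain ⟨h1, h2⟩ := le_of_symGen_le_symAnn x (hle.trans (symGen_le_symAnn x))
      exact ⟨Fl.mono hI h1, Fr.mono hJ h2⟩
  · constructor
    · rintro ⟨I, hI, J, hJ, hle⟩
      exact ⟨I, hI, J, hJ, hle.trans (symGen_le_symAnn x)⟩
    · rintro ⟨I, hI, J, hJ, hle⟩
      obtain ⟨h1, h2⟩ := le_of_symGen_le_symAnn x hle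
      exact ⟨I, hI, J, hJ, symGen_mono h1 h2⟩
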